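/- Suppose a multi-labeling of an l-graph has excess Δ := (l + Σ_s d_s)/2 + 1 − m, where d_s is the number of n-labels on the s-th n-vertex and m is the number of distinct labels. For each pair (i, j), let b_{ij} be the number of edges whose p-endpoint is labeled i and whose n-endpoint tuple contains j. Then Σ_{(i,j): b_{ij} > 2} b_{ij} ≤ 12Δ. -/

import Mathlib

open Finset

/-- Number of edges of the `l`-graph cycle whose `p`-vertex endpoint has label `i`
and whose `n`-vertex endpoint contains `j` in its label tuple. The `s`-th `n`-vertex
sits between the `s`-th and `(s+1)`-th `p`-vertices. -/
def edgeCount {l : ℕ} [NeZero l] (pl : Fin l → ℕ) (nl : Fin l → Finset ℕ) (i j : ℕ) : ℕ :=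
  ∑ s : Fin l, ((if pl s = i ∧ j ∈ nl s then 1 else 0) +
    (if pl (s + 1) = i ∧ j ∈ nl s then 1 else 0))

/-- A multi-labeling of the `l`-graph (a cycle alternating between `l` `p`-vertices and
`l` `n`-vertices): each `p`-vertex gets a label, each `n`-vertex gets a set of between
1 and `D` distinct labels; consecutive `p`-vertices have distinct labels, and every
edge count `b_{ij}` is even. -/
def IsMultiLabeling (l D : ℕ) [NeZero l] (pl : Fin l → ℕ) (nl : Fin l → Finset ℕ) : Prop :=
  (∀ s : Fin l, pl s ≠ pl (s + 1)) ∧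
  (∀ s : Fin l, 1 ≤ (nl s).card ∧ (nl s).card ≤ D) ∧
  (∀ i j : ℕ, Even (edgeCount pl nl i j))

/-- `N_j`: the number of `n`-vertices whose label tuple contains `j`. -/
def nLabelCount {l : ℕ} (nl : Fin l → Finset ℕ) (j : ℕ) : ℕ :=
  (Finset.univ.filter fun s => j ∈ nl s).card

/-- `m`: the total number of distinct `p`-labels plus distinct `n`-labels. -/
def distinctLabels {l : ℕ} (pl : Fin l → ℕ) (nl : Fin l → Finset ℕ) : ℕ :=
  (Finset.univ.image pl).card + (Finset.univ.biUnion nl).card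

/-- The excess `Δ = (l + Σ_s d_s)/2 + 1 − m` of a multi-labeling. -/
noncomputable def excess {l : ℕ} (pl : Fin l → ℕ) (nl : Fin l → Finset ℕ) : ℝ :=
  ((l : ℝ) + ∑ s : Fin l, ((nl s).card : ℝ)) / 2 + 1 - distinctLabels pl nl

namespace Stmt15Aux
open Submodule Module

variable {l : ℕ} [NeZero l] (pl : Fin l → ℕ) (nl : Fin l → Finset ℕ)

abbrev M2 : Type := ℕ →₀ ZMod 2

lemma self_add_self (a : M2) : a + a = 0 := by
  have : a + a = (2 : ZMod 2) • a := by rw [two_smul]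
  rw [this, show (2 : ZMod 2) = 0 by decide, zero_smul]

def Sv (j : ℕ) : Finset (Fin l) := univ.filter (fun s => j ∈ nl s)

def Vv (j : ℕ) : Finset ℕ := (univ.image pl).filter (fun i => 0 < edgeCount pl nl i j)

noncomputable def vmap (s : Fin l) : M2 :=
  Finsupp.single (pl s) 1 + Finsupp.single (pl (s + 1)) 1

noncomputable def spanU (A : Finset (Fin l)) : Submodule (ZMod 2) M2 :=
  span (ZMod 2) ((A.image (vmap pl)) : Set M2)

lemma edgeCount_eq_sum_Sv (i j : ℕ) :
    edgeCount pl nl i j =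
      ∑ s ∈ Sv nl j, ((if pl s = i then 1 else 0) + (if pl (s + 1) = i then 1 else 0)) := by
  rw [Sv, Finset.sum_filter, edgeCount]
  apply Finset.sum_congr rfl
  intro s _
  by_cases hs : j ∈ nl s <;> by_cases h1 : pl s = i <;> by_cases h2 : pl (s+1) = i <;>
    simp [hs, h1, h2]

lemma sum_b_P (j : ℕ) :
    ∑ i ∈ univ.image pl, edgeCount pl nl i j = 2 * (Sv nl j).card := by
  have : ∀ i ∈ univ.image pl, edgeCount pl nl i j =
      ∑ s ∈ Sv nl j, ((if pl s = i then 1 else 0) + (if pl (s + 1) = i then 1 else 0)) :=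
    fun i _ => edgeCount_eq_sum_Sv pl nl i j
  rw [Finset.sum_congr rfl this, Finset.sum_comm]
  rw [Finset.sum_congr rfl (g := fun _ => 2) ?_, Finset.sum_const, smul_eq_mul, mul_comm]
  intro s hs
  rw [Finset.sum_add_distrib, Finset.sum_ite_eq, Finset.sum_ite_eq]
  have h1 : pl s ∈ univ.image pl := Finset.mem_image_of_mem pl (mem_univ s)
  have h2 : pl (s+1) ∈ univ.image pl := Finset.mem_image_of_mem pl (mem_univ (s+1))
  simp [h1, h2]

lemma b_pos_of_mem (j : ℕ) {s : Fin l} (hs : s ∈ Sv nl j) :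
    0 < edgeCount pl nl (pl s) j ∧ 0 < edgeCount pl nl (pl (s+1)) j := by
  have hmem : j ∈ nl s := by simpa [Sv] using hs
  constructor
  · rw [edgeCount]
    apply Finset.sum_pos' (fun t _ => Nat.zero_le _)
    exact ⟨s, mem_univ s, by simp [hmem]⟩
  · rw [edgeCount]
    apply Finset.sum_pos' (fun t _ => Nat.zero_le _)
    exact ⟨s, mem_univ s, by simp [hmem]⟩

lemma endpoints_mem_Vv (j : ℕ) {s : Fin l} (hs : s ∈ Sv nl j) :
    pl s ∈ Vv pl nl j ∧ pl (s+1) ∈ Vv pl nl j := by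
  obtain ⟨h1, h2⟩ := b_pos_of_mem pl nl j hs
  constructor
  · exact Finset.mem_filter.2 ⟨Finset.mem_image_of_mem pl (mem_univ s), h1⟩
  · exact Finset.mem_filter.2 ⟨Finset.mem_image_of_mem pl (mem_univ (s+1)), h2⟩

lemma two_le_card_Vv (hne : ∀ s : Fin l, pl s ≠ pl (s+1)) {j : ℕ} (hj : (Sv nl j).Nonempty) :
    2 ≤ (Vv pl nl j).card := by
  obtain ⟨s, hs⟩ := hj
  obtain ⟨h1, h2⟩ := endpoints_mem_Vv pl nl j hs
  have : {pl s, pl (s+1)} ⊆ Vv pl nl j := by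
    intro x hx
    rcases Finset.mem_insert.1 hx with h | h
    · subst h; exact h1
    · rw [Finset.mem_singleton.1 h]; exact h2
  calc 2 = ({pl s, pl (s+1)} : Finset ℕ).card := (Finset.card_pair (hne s)).symm
    _ ≤ _ := Finset.card_le_card this

lemma card_Vv_le_card_Sv {j : ℕ} (hE : ∀ i, Even (edgeCount pl nl i j)) :
    (Vv pl nl j).card ≤ (Sv nl j).card := by
  have h1 : 2 * (Vv pl nl j).card ≤ ∑ i ∈ Vv pl nl j, edgeCount pl nl i j := by
    rw [mul_comm, ← smul_eq_mul, ← Finset.sum_const]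
    apply Finset.sum_le_sum
    intro i hi
    have hpos : 0 < edgeCount pl nl i j := (Finset.mem_filter.1 hi).2
    obtain ⟨c, hc⟩ := hE i
    omega
  have h2 : ∑ i ∈ Vv pl nl j, edgeCount pl nl i j ≤ ∑ i ∈ univ.image pl, edgeCount pl nl i j :=
    Finset.sum_le_sum_of_subset (Finset.filter_subset _ _)
  have h3 := sum_b_P pl nl j
  omega


lemma sum_vmap_Sv {j : ℕ} (hE : ∀ i, Even (edgeCount pl nl i j)) :
    ∑ s ∈ Sv nl j, vmap pl s = 0 := by
  ext i
  rw [Finsupp.finset_sum_apply]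
  have hterm : ∀ s ∈ Sv nl j, vmap pl s i =
      ((((if pl s = i then 1 else 0) + (if pl (s+1) = i then 1 else 0) : ℕ) : ZMod 2)) := by
    intro s _
    rw [vmap, Finsupp.add_apply, Finsupp.single_apply, Finsupp.single_apply]
    by_cases h1 : pl s = i <;> by_cases h2 : pl (s+1) = i <;> simp [h1, h2] <;> decide
  rw [Finset.sum_congr rfl hterm, ← Nat.cast_sum, ← edgeCount_eq_sum_Sv]
  have : ((edgeCount pl nl i j : ℕ) : ZMod 2) = 0 := by
    rw [ZMod.natCast_eq_zero_iff]
    exact (hE i).two_dvd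
  rw [this]
  simp

noncomputable instance spanU_fd (A : Finset (Fin l)) :
    FiniteDimensional (ZMod 2) (spanU pl A) :=
  FiniteDimensional.span_finset _ _

lemma finrank_sup_le' (X Y : Submodule (ZMod 2) M2) [FiniteDimensional (ZMod 2) X]
    [FiniteDimensional (ZMod 2) Y] :
    finrank (ZMod 2) ↥(X ⊔ Y) ≤ finrank (ZMod 2) X + finrank (ZMod 2) Y := by
  have := finrank_sup_add_finrank_inf_eq X Y
  omega

lemma finrank_span_finset_le (B : Finset M2) :
    finrank (ZMod 2) (span (ZMod 2) (B : Set M2)) ≤ B.card := by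
  simpa [Set.finrank] using finrank_span_finset_le_card B

lemma claimA (hne : ∀ s : Fin l, pl s ≠ pl (s+1)) (hE : ∀ i j, Even (edgeCount pl nl i j)) :
    ∀ J : Finset ℕ, (∀ j ∈ J, (Sv nl j).Nonempty) →
    2 * finrank (ZMod 2) (spanU pl (J.biUnion (Sv nl))) + 2 * J.card ≤
      (J.biUnion (Sv nl)).card + ∑ j ∈ J, (Vv pl nl j).card := by
  intro J
  induction J using Finset.induction_on with
  | empty => intro _; simp [spanU, finrank_bot]; exact Nat.le_zero.mp (finrank_span_finset_le _)
  | @insert j J hj IH =>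
    intro hJ
    have hJ' : ∀ j' ∈ J, (Sv nl j').Nonempty := fun j' hj' => hJ j' (mem_insert_of_mem hj')
    have IH' := IH hJ'
    have hSvne : (Sv nl j).Nonempty := hJ j (mem_insert_self j J)
    have hv2 : 2 ≤ (Vv pl nl j).card := two_le_card_Vv pl nl hne hSvne
    set A := J.biUnion (Sv nl) with hAdef
    set Δ := Sv nl j \ A with hΔdef
    have hA' : (insert j J).biUnion (Sv nl) = A ∪ Δ := by
      rw [Finset.biUnion_insert, Finset.union_comm, Finset.union_sdiff_self_eq_union]
    have hcard : ((insert j J).biUnion (Sv nl)).card = A.card + Δ.card := by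
      rw [hA', Finset.card_union_of_disjoint Finset.disjoint_sdiff]
    have hsum : ∑ j' ∈ insert j J, (Vv pl nl j').card
        = (Vv pl nl j).card + ∑ j' ∈ J, (Vv pl nl j').card := Finset.sum_insert hj
    have hcardins : (insert j J).card = J.card + 1 := by
      rw [Finset.card_insert_of_notMem hj]
    rcases Finset.eq_empty_or_nonempty Δ with hΔ | hΔ
    · have hAA : (insert j J).biUnion (Sv nl) = A := by rw [hA', hΔ, Finset.union_empty]
      rw [hAA, hsum, hcardins]
      omega
    · obtain ⟨s0, hs0⟩ := hΔ
      have hs0Sv : s0 ∈ Sv nl j := (Finset.mem_sdiff.1 hs0).1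
      have hi0 : pl s0 ∈ Vv pl nl j := (endpoints_mem_Vv pl nl j hs0Sv).1
      have hsum0 : vmap pl s0 + ∑ s ∈ (Sv nl j).erase s0, vmap pl s = 0 := by
        rw [Finset.add_sum_erase _ _ hs0Sv]
        exact sum_vmap_Sv pl nl (fun i => hE i j)
      have hrepr : vmap pl s0 = ∑ s ∈ (Sv nl j).erase s0, vmap pl s := by
        have h1 := eq_neg_of_add_eq_zero_left hsum0
        have h2 := neg_eq_of_add_eq_zero_left
          (self_add_self (∑ s ∈ (Sv nl j).erase s0, vmap pl s))
        rw [h1, h2]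
      -- bound 1 : via new positions
      have hle1 : spanU pl ((insert j J).biUnion (Sv nl)) ≤
          spanU pl A ⊔ span (ZMod 2) (((Δ.erase s0).image (vmap pl) : Finset M2) : Set M2) := by
        rw [spanU, span_le]
        intro x hx
        simp only [Finset.coe_image, Set.mem_image, Finset.mem_coe] at hx
        obtain ⟨s, hs, rfl⟩ := hx
        rw [hA'] at hs
        have hmemA : ∀ t, t ∈ A → vmap pl t ∈ spanU pl A ⊔
            span (ZMod 2) (((Δ.erase s0).image (vmap pl) : Finset M2) : Set M2) := fun t ht =>
          Submodule.mem_sup_left (subset_span (by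
            simp only [Finset.coe_image, Set.mem_image, Finset.mem_coe]; exact ⟨t, ht, rfl⟩))
        have hmemΔ : ∀ t, t ∈ Δ.erase s0 → vmap pl t ∈ spanU pl A ⊔
            span (ZMod 2) (((Δ.erase s0).image (vmap pl) : Finset M2) : Set M2) := fun t ht =>
          Submodule.mem_sup_right (subset_span (by
            simp only [Finset.coe_image, Set.mem_image, Finset.mem_coe]; exact ⟨t, ht, rfl⟩))
        rcases Finset.mem_union.1 hs with hsA | hsΔ
        · exact hmemA s hsA
        · by_cases hss0 : s = s0
          · rw [hss0, hrepr]
            apply sum_mem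
            intro t ht
            have htne : t ≠ s0 := Finset.ne_of_mem_erase ht
            have htSv : t ∈ Sv nl j := Finset.mem_of_mem_erase ht
            by_cases htA : t ∈ A
            · exact hmemA t htA
            · exact hmemΔ t (Finset.mem_erase.2 ⟨htne, Finset.mem_sdiff.2 ⟨htSv, htA⟩⟩)
          · exact hmemΔ s (Finset.mem_erase.2 ⟨hss0, hsΔ⟩)
      have hb1 : finrank (ZMod 2) (spanU pl ((insert j J).biUnion (Sv nl)))
          ≤ finrank (ZMod 2) (spanU pl A) + (Δ.erase s0).card := by
        refine le_trans (finrank_mono hle1) (le_trans (finrank_sup_le' _ _) ?_)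
        have h1 := finrank_span_finset_le ((Δ.erase s0).image (vmap pl))
        have h2 := Finset.card_image_le (s := Δ.erase s0) (f := vmap pl)
        omega
      -- bound 2 : via vertex labels
      have hfmem : ∀ i ∈ Vv pl nl j,
          (Finsupp.single (pl s0) 1 + Finsupp.single i (1 : ZMod 2)) ∈
            span (ZMod 2) ((((Vv pl nl j).erase (pl s0)).image
              (fun i => Finsupp.single (pl s0) 1 + Finsupp.single i (1 : ZMod 2)) :
                Finset M2) : Set M2) := by
        intro i hi
        by_cases hieq : i = pl s0
        · subst hieq
          rw [self_add_self]
          exact zero_mem _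
        · apply subset_span
          simp only [Finset.coe_image, Set.mem_image, Finset.mem_coe]
          exact ⟨i, Finset.mem_erase.2 ⟨hieq, hi⟩, rfl⟩
      have hle2 : spanU pl ((insert j J).biUnion (Sv nl)) ≤
          spanU pl A ⊔ span (ZMod 2) ((((Vv pl nl j).erase (pl s0)).image
            (fun i => Finsupp.single (pl s0) 1 + Finsupp.single i (1 : ZMod 2)) :
              Finset M2) : Set M2) := by
        rw [spanU, span_le]
        intro x hx
        simp only [Finset.coe_image, Set.mem_image, Finset.mem_coe] at hx
        obtain ⟨s, hs, rfl⟩ := hx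
        rw [hA'] at hs
        rcases Finset.mem_union.1 hs with hsA | hsΔ
        · exact Submodule.mem_sup_left (subset_span (by
            simp only [Finset.coe_image, Set.mem_image, Finset.mem_coe]; exact ⟨s, hsA, rfl⟩))
        · have hsSv : s ∈ Sv nl j := (Finset.mem_sdiff.1 hsΔ).1
          have hdecomp : vmap pl s =
              (Finsupp.single (pl s0) 1 + Finsupp.single (pl s) (1 : ZMod 2)) +
              (Finsupp.single (pl s0) 1 + Finsupp.single (pl (s+1)) (1 : ZMod 2)) := by
            rw [vmap, add_add_add_comm, self_add_self, zero_add]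
          rw [hdecomp]
          exact Submodule.mem_sup_right (add_mem
            (hfmem _ (endpoints_mem_Vv pl nl j hsSv).1)
            (hfmem _ (endpoints_mem_Vv pl nl j hsSv).2))
      have hb2 : finrank (ZMod 2) (spanU pl ((insert j J).biUnion (Sv nl)))
          ≤ finrank (ZMod 2) (spanU pl A) + ((Vv pl nl j).erase (pl s0)).card := by
        refine le_trans (finrank_mono hle2) (le_trans (finrank_sup_le' _ _) ?_)
        have h1 := finrank_span_finset_le (((Vv pl nl j).erase (pl s0)).image
          (fun i => Finsupp.single (pl s0) 1 + Finsupp.single i (1 : ZMod 2)))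
        have h2 := Finset.card_image_le (s := (Vv pl nl j).erase (pl s0))
          (f := fun i => Finsupp.single (pl s0) 1 + Finsupp.single i (1 : ZMod 2))
        omega
      have he1 : (Δ.erase s0).card + 1 = Δ.card := Finset.card_erase_add_one hs0
      have he2 : ((Vv pl nl j).erase (pl s0)).card + 1 = (Vv pl nl j).card :=
        Finset.card_erase_add_one hi0
      rw [hcard, hsum, hcardins]
      omega

lemma telescope (k : ℕ) (hk : k < l) :
    Finsupp.single (pl 0) 1 + Finsupp.single (pl ⟨k, hk⟩) (1 : ZMod 2) ∈
      spanU pl (univ : Finset (Fin l)) := by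
  induction k with
  | zero =>
    have h0 : (⟨0, hk⟩ : Fin l) = 0 := Fin.ext (by simp)
    rw [h0, self_add_self]
    exact zero_mem _
  | succ k IH =>
    have hk' : k < l := Nat.lt_of_succ_lt hk
    have hvm : vmap pl ⟨k, hk'⟩ ∈ spanU pl (univ : Finset (Fin l)) := by
      apply subset_span
      simp only [Finset.coe_image, Set.mem_image, Finset.mem_coe]
      exact ⟨⟨k, hk'⟩, mem_univ _, rfl⟩
    have hfin : (⟨k, hk'⟩ : Fin l) + 1 = ⟨k+1, hk⟩ := by
      apply Fin.ext
      rw [Fin.val_add, Fin.val_one']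
      have h1 : 1 % l = 1 := Nat.mod_eq_of_lt (by omega)
      have h2 : (k + 1) % l = k + 1 := Nat.mod_eq_of_lt hk
      simp [h1, h2]
    have hmem := add_mem (IH hk') hvm
    rw [vmap, hfin] at hmem
    have hcomb : (Finsupp.single (pl 0) 1 + Finsupp.single (pl ⟨k, hk'⟩) (1 : ZMod 2)) +
        (Finsupp.single (pl ⟨k, hk'⟩) 1 + Finsupp.single (pl ⟨k+1, hk⟩) (1 : ZMod 2)) =
        (Finsupp.single (pl 0) 1 + Finsupp.single (pl ⟨k+1, hk⟩) (1 : ZMod 2)) +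
        (Finsupp.single (pl ⟨k, hk'⟩) 1 + Finsupp.single (pl ⟨k, hk'⟩) (1 : ZMod 2)) := by
      abel
    rw [hcomb, self_add_self, add_zero] at hmem
    exact hmem

lemma claimB :
    (univ.image pl).card ≤ finrank (ZMod 2) (spanU pl (univ : Finset (Fin l))) + 1 := by
  classical
  set U := spanU pl (univ : Finset (Fin l)) with hU
  set P := (univ.image pl) with hP
  have hp0 : pl 0 ∈ P := Finset.mem_image_of_mem pl (mem_univ 0)
  have hUmem : ∀ i ∈ P.erase (pl 0),
      (Finsupp.single (pl 0) 1 + Finsupp.single i (1 : ZMod 2)) ∈ U := by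
    intro i hi
    obtain ⟨s, _, rfl⟩ := Finset.mem_image.1 (Finset.mem_of_mem_erase hi)
    have := telescope pl s.val s.isLt
    simpa using this
  set g : {x // x ∈ P.erase (pl 0)} → M2 :=
    (fun i => Finsupp.single (pl 0) 1 + Finsupp.single (i : ℕ) (1 : ZMod 2)) with hg
  set φ : M2 →ₗ[ZMod 2] M2 :=
    LinearMap.id - (Finsupp.lsingle (pl 0)).comp (Finsupp.lapply (pl 0)) with hφ
  have hφg : (⇑φ ∘ g) = fun i : {x // x ∈ P.erase (pl 0)} =>
      Finsupp.single (i : ℕ) (1 : ZMod 2) := by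
    funext i
    have hi0 : (i : ℕ) ≠ pl 0 := Finset.ne_of_mem_erase i.2
    simp only [hφ, hg, Function.comp_apply, LinearMap.sub_apply, LinearMap.id_apply,
      LinearMap.comp_apply, Finsupp.lapply_apply, Finsupp.lsingle_apply]
    rw [Finsupp.add_apply, Finsupp.single_apply, Finsupp.single_apply]
    rw [if_pos rfl, if_neg hi0, add_zero]
    abel
  have hbase : LinearIndependent (ZMod 2)
      (fun i : {x // x ∈ P.erase (pl 0)} => Finsupp.single (i : ℕ) (1 : ZMod 2)) := by
    have h1 : LinearIndependent (ZMod 2) (fun i : ℕ => Finsupp.single i (1 : ZMod 2)) := by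
      have := (Finsupp.basisSingleOne (R := ZMod 2) (ι := ℕ)).linearIndependent
      simpa [Finsupp.coe_basisSingleOne] using this
    exact h1.comp _ Subtype.val_injective
  have hgind : LinearIndependent (ZMod 2) g :=
    LinearIndependent.of_comp φ (by rw [hφg]; exact hbase)
  set g' : {x // x ∈ P.erase (pl 0)} → ↥U := fun i => ⟨g i, hUmem i i.2⟩ with hg'
  have hg'ind : LinearIndependent (ZMod 2) g' := by
    apply LinearIndependent.of_comp U.subtype
    have : (⇑U.subtype ∘ g') = g := rfl
    rw [this]
    exact hgind
  have hcardle := hg'ind.fintype_card_le_finrank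
  rw [Fintype.card_coe] at hcardle
  have := Finset.card_erase_add_one hp0
  omega

lemma cover (hd : ∀ s : Fin l, 1 ≤ (nl s).card) :
    (univ.biUnion nl).biUnion (Sv nl) = (univ : Finset (Fin l)) := by
  apply Finset.eq_univ_iff_forall.2
  intro s
  obtain ⟨j, hj⟩ := Finset.card_pos.1 (hd s)
  exact Finset.mem_biUnion.2 ⟨j, Finset.mem_biUnion.2 ⟨s, mem_univ s, hj⟩,
    Finset.mem_filter.2 ⟨mem_univ s, hj⟩⟩

lemma sum_Sv_card :
    ∑ j ∈ univ.biUnion nl, (Sv nl j).card = ∑ s : Fin l, (nl s).card := by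
  have h1 : ∀ j, (Sv nl j).card = ∑ s : Fin l, if j ∈ nl s then 1 else 0 := by
    intro j; rw [Sv, Finset.card_filter]
  simp only [h1]
  rw [Finset.sum_comm]
  apply Finset.sum_congr rfl
  intro s _
  rw [← Finset.card_filter]
  congr 1
  ext j
  simp only [Finset.mem_filter, Finset.mem_biUnion]
  exact ⟨fun h => h.2, fun h => ⟨⟨s, mem_univ s, h⟩, h⟩⟩

lemma E4j {j : ℕ} (hE : ∀ i, Even (edgeCount pl nl i j)) :
    (∑ i ∈ univ.image pl, if 2 < edgeCount pl nl i j then edgeCount pl nl i j else 0)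
      + 4 * (Vv pl nl j).card ≤ 4 * (Sv nl j).card := by
  have h1 : 4 * (Vv pl nl j).card =
      ∑ i ∈ univ.image pl, (if 0 < edgeCount pl nl i j then 4 else 0) := by
    rw [Vv, Finset.card_filter, Finset.mul_sum]
    apply Finset.sum_congr rfl
    intro i _
    split <;> simp
  have h2 : (∑ i ∈ univ.image pl, if 2 < edgeCount pl nl i j then edgeCount pl nl i j else 0)
      + (∑ i ∈ univ.image pl, (if 0 < edgeCount pl nl i j then 4 else 0))
      ≤ ∑ i ∈ univ.image pl, 2 * edgeCount pl nl i j := by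
    rw [← Finset.sum_add_distrib]
    apply Finset.sum_le_sum
    intro i _
    obtain ⟨c, hc⟩ := hE i
    by_cases ha : 2 < edgeCount pl nl i j <;> by_cases hb : 0 < edgeCount pl nl i j <;>
      simp [ha, hb] <;> omega
  have h3 : ∑ i ∈ univ.image pl, 2 * edgeCount pl nl i j = 4 * (Sv nl j).card := by
    rw [← Finset.mul_sum, sum_b_P]
    ring
  omega

lemma mainN (hne : ∀ s : Fin l, pl s ≠ pl (s+1)) (hd : ∀ s : Fin l, 1 ≤ (nl s).card)
    (hE : ∀ i j, Even (edgeCount pl nl i j)) :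
    (∑ i ∈ univ.image pl, ∑ j ∈ univ.biUnion nl,
        if 2 < edgeCount pl nl i j then edgeCount pl nl i j else 0)
      + 12 * ((univ.image pl).card + (univ.biUnion nl).card)
      ≤ 6 * l + 6 * (∑ s : Fin l, (nl s).card) + 12 := by
  classical
  have hswap : (∑ i ∈ univ.image pl, ∑ j ∈ univ.biUnion nl,
      if 2 < edgeCount pl nl i j then edgeCount pl nl i j else 0)
      = ∑ j ∈ univ.biUnion nl, ∑ i ∈ univ.image pl,
        (if 2 < edgeCount pl nl i j then edgeCount pl nl i j else 0) := Finset.sum_comm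
  have hT : (∑ j ∈ univ.biUnion nl, ∑ i ∈ univ.image pl,
        (if 2 < edgeCount pl nl i j then edgeCount pl nl i j else 0))
      + 4 * (∑ j ∈ univ.biUnion nl, (Vv pl nl j).card)
      ≤ 4 * (∑ j ∈ univ.biUnion nl, (Sv nl j).card) := by
    rw [Finset.mul_sum, Finset.mul_sum, ← Finset.sum_add_distrib]
    apply Finset.sum_le_sum
    intro j _
    exact E4j pl nl (fun i => hE i j)
  have hss := sum_Sv_card nl
  have hsv : (∑ j ∈ univ.biUnion nl, (Vv pl nl j).card)
      ≤ ∑ j ∈ univ.biUnion nl, (Sv nl j).card :=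
    Finset.sum_le_sum (fun j _ => card_Vv_le_card_Sv pl nl (fun i => hE i j))
  have hA := claimA pl nl hne hE (univ.biUnion nl) (fun j hj => by
    obtain ⟨s, _, hs⟩ := Finset.mem_biUnion.1 hj
    exact ⟨s, Finset.mem_filter.2 ⟨mem_univ s, hs⟩⟩)
  rw [cover nl hd] at hA
  have hcard : (univ : Finset (Fin l)).card = l := by
    rw [Finset.card_univ, Fintype.card_fin]
  rw [hcard] at hA
  have hB := claimB pl
  omega

end Stmt15Aux

theorem stmt15 (l D : ℕ) [NeZero l] (hl : 2 ≤ l)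
    (pl : Fin l → ℕ) (nl : Fin l → Finset ℕ)
    (h : IsMultiLabeling l D pl nl) :
    ∑ i ∈ Finset.univ.image pl, ∑ j ∈ Finset.univ.biUnion nl,
        (if 2 < edgeCount pl nl i j then (edgeCount pl nl i j : ℝ) else 0) ≤
      12 * excess pl nl := by
  obtain ⟨hne, hcard, hE⟩ := h
  have hd : ∀ s : Fin l, 1 ≤ (nl s).card := fun s => (hcard s).1
  have hN := Stmt15Aux.mainN pl nl hne hd hE
  have hcast : ((∑ i ∈ Finset.univ.image pl, ∑ j ∈ Finset.univ.biUnion nl,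
      if 2 < edgeCount pl nl i j then edgeCount pl nl i j else 0 : ℕ) : ℝ)
      = ∑ i ∈ Finset.univ.image pl, ∑ j ∈ Finset.univ.biUnion nl,
        (if 2 < edgeCount pl nl i j then (edgeCount pl nl i j : ℝ) else 0) := by
    push_cast
    apply Finset.sum_congr rfl
    intro i _
    apply Finset.sum_congr rfl
    intro j _
    split <;> simp
  rw [← hcast]
  have hexp : 12 * excess pl nl = 6 * (l : ℝ) + 6 * ((∑ s : Fin l, (nl s).card : ℕ) : ℝ) + 12
      - 12 * (((Finset.univ.image pl).card + (Finset.univ.biUnion nl).card : ℕ) : ℝ) := by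
    rw [excess, distinctLabels]
    push_cast
    ring
  rw [hexp]
  have hNR : ((∑ i ∈ Finset.univ.image pl, ∑ j ∈ Finset.univ.biUnion nl,
      if 2 < edgeCount pl nl i j then edgeCount pl nl i j else 0 : ℕ) : ℝ)
      + 12 * (((Finset.univ.image pl).card + (Finset.univ.biUnion nl).card : ℕ) : ℝ)
      ≤ 6 * (l : ℝ) + 6 * ((∑ s : Fin l, (nl s).card : ℕ) : ℝ) + 12 := by
    have := (Nat.cast_le (α := ℝ)).2 hN
    push_cast at this ⊢
    linarith
  linarith
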